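/- Let μ and ν be atomless probability measures on ℝ with finite first moments, and let x' < x'' < g'' and K₁ be reals with x'' < K₁ < g''. Suppose μ((x',x'')) = ν((x',g'')) and ∫_{(x',x'')} w dμ(w) = ∫_{(x',g'')} w dν(w). Then, with Θ₂ := (K₁ − x'')/(g'' − x''), one has Θ₂·[P_ν(g'') − P_ν(x') − P_μ(x'') + P_μ(x')] = (K₁ − x'')·μ((−∞,x'')) + Θ₂·(g'' − x')·(ν((−∞,x')) − μ((−∞,x'))). -/

import Mathlib

open MeasureTheory Set

/-- The put price function `P_η(k) = ∫ (k-x)⁺ dη(x)`. -/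
noncomputable def putPrice (η : Measure ℝ) (k : ℝ) : ℝ := ∫ x, max (k - x) 0 ∂η

/-- `π` is a martingale coupling of `μ` and `ν`. -/
def IsMartingaleCoupling (μ ν : Measure ℝ) (π : Measure (ℝ × ℝ)) : Prop :=
  IsProbabilityMeasure π ∧ π.map Prod.fst = μ ∧ π.map Prod.snd = ν ∧
    ∀ B : Set ℝ, MeasurableSet B →
      ∫ p in B ×ˢ (Set.univ : Set ℝ), p.2 ∂π = ∫ x in B, x ∂μ

/-- The American-put payoff under coupling `π` and exercise set `B`. -/
noncomputable def amPayoff (K₁ K₂ : ℝ) (π : Measure (ℝ × ℝ)) (B : Set ℝ) : ℝ :=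
  ∫ p, (B.indicator (fun x => max (K₁ - x) 0) p.1
      + Bᶜ.indicator (fun _ => max (K₂ - p.2) 0) p.1) ∂π

/-- Put-price identity used in the region `G` computation: with
`Θ₂ = (K₁-x'')/(g''-x'')`, under the mass and mean equations on `(x',x'') → (x',g'')`,
`Θ₂·[P_ν(g'') - P_ν(x') - P_μ(x'') + P_μ(x')]`
` = (K₁-x'')·μ((-∞,x'')) + Θ₂·(g''-x')·(ν((-∞,x')) - μ((-∞,x')))`. -/

lemma put_integrand_integrable (η : Measure ℝ) [IsFiniteMeasure η]
    (hint : Integrable (fun w => w) η) (k : ℝ) :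
    Integrable (fun x => max (k - x) 0) η :=
  ((integrable_const k).sub hint).pos_part

lemma measure_union_singleton (η : Measure ℝ) (s : Set ℝ) (a : ℝ) (ha : η {a} = 0) :
    η (s ∪ {a}) = η s :=
  le_antisymm ((measure_union_le _ _).trans (by simp [ha])) (measure_mono subset_union_left)

lemma put_diff (η : Measure ℝ) [IsFiniteMeasure η] (hint : Integrable (fun w => w) η)
    {a b : ℝ} (hab : a ≤ b) (ha : η {a} = 0) :
    putPrice η b - putPrice η a
      = (b - a) * (η (Iio a)).toReal
        + (b * (η (Ioo a b)).toReal - ∫ x in Ioo a b, x ∂η) := by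
  have hIb := put_integrand_integrable η hint b
  have hIa := put_integrand_integrable η hint a
  have hIic : η (Iic a) = η (Iio a) := by
    have : Iic a = Iio a ∪ {a} := by ext y; simp [le_iff_lt_or_eq]
    rw [this]; exact measure_union_singleton η _ a ha
  have hfun : (fun x => max (b - x) 0 - max (a - x) 0)
      = fun x => (Iic a).indicator (fun _ => b - a) x
        + (Ioo a b).indicator (fun y => b - y) x := by
    funext x
    rcases le_or_gt x a with hx | hx
    · have h1 : max (b - x) 0 = b - x := max_eq_left (by linarith)
      have h2 : max (a - x) 0 = a - x := max_eq_left (by linarith)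
      rw [indicator_of_mem (mem_Iic.2 hx),
        indicator_of_notMem (show x ∉ Ioo a b by simp only [mem_Ioo]; rintro ⟨h', -⟩; linarith)]
      simp only [h1, h2, add_zero]; ring
    · have h2 : max (a - x) 0 = 0 := max_eq_right (by linarith)
      rcases lt_or_ge x b with hxb | hxb
      · have h1 : max (b - x) 0 = b - x := max_eq_left (by linarith)
        rw [indicator_of_notMem (notMem_Iic.2 hx), indicator_of_mem (mem_Ioo.2 ⟨hx, hxb⟩)]
        simp [h1, h2]
      · have h1 : max (b - x) 0 = 0 := max_eq_right (by linarith)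
        rw [indicator_of_notMem (notMem_Iic.2 hx),
          indicator_of_notMem (show x ∉ Ioo a b by simp only [mem_Ioo]; rintro ⟨-, h'⟩; linarith)]
        simp [h1, h2]
  have hind1 : Integrable ((Iic a).indicator (fun _ : ℝ => b - a)) η :=
    (integrable_const (b - a)).indicator measurableSet_Iic
  have hind2 : Integrable ((Ioo a b).indicator (fun y : ℝ => b - y)) η :=
    ((integrable_const b).sub hint).indicator measurableSet_Ioo
  rw [putPrice, putPrice, ← integral_sub hIb hIa]
  calc ∫ x, (max (b - x) 0 - max (a - x) 0) ∂η
      = ∫ x, ((Iic a).indicator (fun _ => b - a) x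
          + (Ioo a b).indicator (fun y => b - y) x) ∂η := by rw [hfun]
    _ = (∫ x, (Iic a).indicator (fun _ => b - a) x ∂η)
        + ∫ x, (Ioo a b).indicator (fun y => b - y) x ∂η := integral_add hind1 hind2
    _ = (b - a) * (η (Iio a)).toReal
        + (b * (η (Ioo a b)).toReal - ∫ x in Ioo a b, x ∂η) := by
        rw [integral_indicator measurableSet_Iic, integral_indicator measurableSet_Ioo,
          setIntegral_const, measureReal_def, hIic,
          integral_sub ((integrableOn_const (measure_ne_top _ _)).integrable)
            hint.integrableOn, setIntegral_const]
        simp only [smul_eq_mul, measureReal_def]; ring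

theorem put_price_identity_G
    (μ ν : Measure ℝ) [IsProbabilityMeasure μ] [IsProbabilityMeasure ν]
    (hμint : Integrable (fun w => w) μ) (hνint : Integrable (fun w => w) ν)
    (hμa : ∀ w : ℝ, μ {w} = 0) (hνa : ∀ w : ℝ, ν {w} = 0)
    (x' x'' g'' K₁ : ℝ)
    (h1 : x' < x'') (h2 : x'' < g'') (h3 : x'' < K₁) (h4 : K₁ < g'')
    (hmass : μ (Set.Ioo x' x'') = ν (Set.Ioo x' g''))
    (hmean : ∫ w in Set.Ioo x' x'', w ∂μ = ∫ w in Set.Ioo x' g'', w ∂ν) :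
    ((K₁ - x'') / (g'' - x'')) *
        (putPrice ν g'' - putPrice ν x' - putPrice μ x'' + putPrice μ x')
      = (K₁ - x'') * (μ (Set.Iio x'')).toReal
        + ((K₁ - x'') / (g'' - x'')) * (g'' - x') *
            ((ν (Set.Iio x')).toReal - (μ (Set.Iio x')).toReal) := by
  have hνd := put_diff ν hνint (a := x') (b := g'') (by linarith) (hνa x')
  have hμd := put_diff μ hμint (a := x') (b := x'') (le_of_lt h1) (hμa x')
  have hkey : putPrice ν g'' - putPrice ν x' - putPrice μ x'' + putPrice μ x'
      = ((g'' - x') * (ν (Iio x')).toReal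
          + (g'' * (ν (Ioo x' g'')).toReal - ∫ x in Ioo x' g'', x ∂ν))
        - ((x'' - x') * (μ (Iio x')).toReal
          + (x'' * (μ (Ioo x' x'')).toReal - ∫ x in Ioo x' x'', x ∂μ)) := by
    linarith [hνd, hμd]
  have hsplit : μ (Iio x'') = μ (Iio x') + μ (Ioo x' x'') := by
    have hs : Iio x'' = (Iio x' ∪ Ioo x' x'') ∪ {x'} := by
      ext y
      simp only [mem_union, mem_Iio, mem_Ioo, mem_singleton_iff]
      constructor
      · intro hy
        rcases lt_trichotomy y x' with h | h | h
        · exact Or.inl (Or.inl h)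
        · exact Or.inr h
        · exact Or.inl (Or.inr ⟨h, hy⟩)
      · rintro ((h | ⟨-, h⟩) | rfl) <;> linarith
    rw [hs, measure_union_singleton μ _ x' (hμa x'),
      measure_union (by simp [disjoint_left, mem_Ioo]; intro y hy h; linarith)
        measurableSet_Ioo]
  have hsplitR : (μ (Iio x'')).toReal
      = (μ (Iio x')).toReal + (μ (Ioo x' x'')).toReal := by
    rw [hsplit, ENNReal.toReal_add (measure_ne_top _ _) (measure_ne_top _ _)]
  have hmassR : (μ (Ioo x' x'')).toReal = (ν (Ioo x' g'')).toReal := by rw [hmass]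
  have hg : g'' - x'' ≠ 0 := by linarith
  rw [hkey, hsplitR, hmassR, hmean]
  field_simp
  ring
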